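/- Let a, x, b ∈ ℝ with x ≠ a. If (a−x)·b ≤ 0, then ∫₀^∞ (|a−x|/t^{3/2}) φ((a + bt − x)/√t) dt = 1, while if (a−x)·b > 0, then ∫₀^∞ (|a−x|/t^{3/2}) φ((a + bt − x)/√t) dt = e^{−2b(a−x)}. (Equivalently: the first-passage time of Brownian motion through the line a + bt is finite with probability one when (a−x)b ≤ 0, and has defective distribution with total mass e^{−2b(a−x)} when (a−x)b > 0.) -/

import Mathlib

open Real MeasureTheory Set Filter
open Topology

/-- Standard Gaussian density φ(z) = (1/√(2π)) e^{−z²/2}. -/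
noncomputable def gaussPdf (z : ℝ) : ℝ := (1 / Real.sqrt (2 * π)) * Real.exp (-z ^ 2 / 2)

/-- Standard Gaussian distribution function Φ(y) = ∫_{−∞}^y φ(z) dz. -/
noncomputable def gaussCdf (y : ℝ) : ℝ := ∫ z in Set.Iio y, gaussPdf z

/-- ψ_t(u) = (e^{−b²u/2}/(π√(u(t−u)))) · [ e^{−b²(t−u)/2}
      + (b/2)·√(2π(t−u)) · (2Φ(b√(t−u)) − 1) ]. -/
noncomputable def psi (b t u : ℝ) : ℝ :=
  (Real.exp (-b ^ 2 * u / 2) / (π * Real.sqrt (u * (t - u)))) *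
    (Real.exp (-b ^ 2 * (t - u) / 2) +
      (b / 2) * Real.sqrt (2 * π * (t - u)) *
        (2 * gaussCdf (b * Real.sqrt (t - u)) - 1))

/-- Inverse Gaussian first-passage density f_{τ₁}(t) = (|a−x|/t^{3/2}) φ((a+bt−x)/√t). -/
noncomputable def invGaussPdf (a x b t : ℝ) : ℝ :=
  (|a - x| / t ^ ((3 : ℝ) / 2)) * gaussPdf ((a + b * t - x) / Real.sqrt t)

lemma gaussPdf_nonneg (z : ℝ) : 0 ≤ gaussPdf z := by
  unfold gaussPdf; positivity

lemma gaussPdf_even (z : ℝ) : gaussPdf (-z) = gaussPdf z := by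
  simp [gaussPdf]

lemma continuous_gaussPdf : Continuous gaussPdf := by
  unfold gaussPdf; fun_prop

lemma integrable_gaussPdf : Integrable gaussPdf := by
  have h : Integrable (fun z : ℝ => Real.exp (-(1/2) * z ^ 2)) := integrable_exp_neg_mul_sq (by norm_num)
  have := h.const_mul (1 / Real.sqrt (2 * π))
  refine this.congr ?_
  filter_upwards with z
  unfold gaussPdf
  ring_nf

lemma integral_gaussPdf : ∫ z, gaussPdf z = 1 := by
  unfold gaussPdf
  rw [MeasureTheory.integral_const_mul]
  have : ∀ z : ℝ, Real.exp (-z ^ 2 / 2) = Real.exp (-(1/2) * z ^ 2) := by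
    intro z; ring_nf
  simp_rw [this, integral_gaussian]
  rw [one_div, inv_mul_eq_div, div_eq_one_iff_eq (by positivity)]
  congr 1
  rw [div_div_eq_mul_div, div_one, mul_comm]

lemma gaussCdf_eq (y : ℝ) : gaussCdf y = gaussCdf 0 + ∫ x in (0:ℝ)..y, gaussPdf x := by
  unfold gaussCdf
  rw [← integral_Iic_eq_integral_Iio, ← integral_Iic_eq_integral_Iio,
    ← intervalIntegral.integral_Iic_sub_Iic integrable_gaussPdf.integrableOn integrable_gaussPdf.integrableOn]
  ring

lemma hasDerivAt_gaussCdf (y : ℝ) : HasDerivAt gaussCdf (gaussPdf y) y := by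
  have hfun : gaussCdf = fun y => gaussCdf 0 + ∫ x in (0:ℝ)..y, gaussPdf x :=
    funext gaussCdf_eq
  rw [hfun]
  exact (intervalIntegral.integral_hasDerivAt_right
    integrable_gaussPdf.intervalIntegrable
    (continuous_gaussPdf.stronglyMeasurableAtFilter _ _)
    continuous_gaussPdf.continuousAt).const_add _

lemma continuous_gaussCdf : Continuous gaussCdf :=
  continuous_iff_continuousAt.2 fun y => (hasDerivAt_gaussCdf y).continuousAt

lemma tendsto_gaussCdf_atTop : Tendsto gaussCdf atTop (𝓝 1) := by
  have h := tendsto_setIntegral_of_monotone (f := gaussPdf) (μ := volume)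
    (s := fun y : ℝ => Iio y) (fun y => measurableSet_Iio)
    (fun y z hyz => Iio_subset_Iio hyz) (by rw [iUnion_Iio]; exact integrable_gaussPdf.integrableOn)
  rw [iUnion_Iio, MeasureTheory.setIntegral_univ, integral_gaussPdf] at h
  exact h

lemma tendsto_gaussCdf_atBot : Tendsto gaussCdf atBot (𝓝 0) := by
  have h := tendsto_setIntegral_of_antitone (f := gaussPdf) (μ := volume)
    (s := fun y : ℝ => Iio (-y)) (fun y => measurableSet_Iio)
    (fun y z hyz => Iio_subset_Iio (by linarith))
    ⟨0, integrable_gaussPdf.integrableOn⟩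
  have hI : ⋂ y : ℝ, Iio (-y) = ∅ := by
    apply eq_empty_iff_forall_notMem.2
    intro x hx
    have := mem_iInter.1 hx (-(x-1))
    simp at this
    linarith
  rw [hI] at h
  simp only [MeasureTheory.setIntegral_empty] at h
  have : Tendsto (fun y : ℝ => -y) atBot atTop := tendsto_neg_atBot_atTop
  have h2 := h.comp this
  refine h2.congr fun y => ?_
  simp [gaussCdf]

lemma gaussCdf_zero : gaussCdf 0 = 1 / 2 := by
  have h1 : (∫ z in Ioi (0:ℝ), gaussPdf z) = ∫ z in Iio (0:ℝ), gaussPdf z := by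
    calc (∫ z in Ioi (0:ℝ), gaussPdf z) = ∫ z in Ioi (0:ℝ), gaussPdf (-z) := by
          simp_rw [gaussPdf_even]
      _ = ∫ z in Iic (-(0:ℝ)), gaussPdf z := integral_comp_neg_Ioi 0 gaussPdf
      _ = ∫ z in Iio (0:ℝ), gaussPdf z := by rw [neg_zero, integral_Iic_eq_integral_Iio]
  have h2 : (∫ z in Iic (0:ℝ), gaussPdf z) + (∫ z in Ioi (0:ℝ), gaussPdf z) = 1 := by
    rw [intervalIntegral.integral_Iic_add_Ioi integrable_gaussPdf.integrableOn
      integrable_gaussPdf.integrableOn, integral_gaussPdf]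
  rw [integral_Iic_eq_integral_Iio, h1] at h2
  unfold gaussCdf
  linarith

noncomputable def FF (c b t : ℝ) : ℝ :=
  if t ≤ 0 then 0 else
    gaussCdf ((-c - b * t) / Real.sqrt t) +
      Real.exp (-2 * b * c) * gaussCdf ((-c + b * t) / Real.sqrt t)

lemma hasDerivAt_FF (c b : ℝ) {t : ℝ} (ht : 0 < t) :
    HasDerivAt (FF c b)
      (c / t ^ ((3 : ℝ) / 2) * gaussPdf ((c + b * t) / Real.sqrt t)) t := by
  set s := Real.sqrt t with hsdef
  have hs0 : 0 < s := Real.sqrt_pos.2 ht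
  have hs2 : s ^ 2 = t := Real.sq_sqrt ht.le
  have h32 : t ^ ((3 : ℝ) / 2) = s ^ 3 := by
    rw [show ((3 : ℝ) / 2) = (1 / 2) * 3 by norm_num, Real.rpow_mul ht.le,
      ← Real.sqrt_eq_rpow, show ((3 : ℝ)) = ((3 : ℕ) : ℝ) by norm_num,
      Real.rpow_natCast]
  have hsder : HasDerivAt Real.sqrt (1 / (2 * s)) t := Real.hasDerivAt_sqrt ht.ne'
  have hu : HasDerivAt (fun t : ℝ => -c - b * t) (-(b * 1)) t :=
    (((hasDerivAt_id t).const_mul b)).const_sub (-c)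
  have hv : HasDerivAt (fun t : ℝ => -c + b * t) (b * 1) t :=
    (((hasDerivAt_id t).const_mul b)).const_add (-c)
  have hg : HasDerivAt (fun t : ℝ => (-c - b * t) / Real.sqrt t)
      ((-(b * 1) * s - (-c - b * t) * (1 / (2 * s))) / s ^ 2) t :=
    hu.div hsder hs0.ne'
  have hh : HasDerivAt (fun t : ℝ => (-c + b * t) / Real.sqrt t)
      ((b * 1 * s - (-c + b * t) * (1 / (2 * s))) / s ^ 2) t :=
    hv.div hsder hs0.ne'
  have hG : HasDerivAt
      (fun t : ℝ => gaussCdf ((-c - b * t) / Real.sqrt t) +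
        Real.exp (-2 * b * c) * gaussCdf ((-c + b * t) / Real.sqrt t))
      (gaussPdf ((-c - b * t) / s) *
          ((-(b * 1) * s - (-c - b * t) * (1 / (2 * s))) / s ^ 2) +
        Real.exp (-2 * b * c) * (gaussPdf ((-c + b * t) / s) *
          ((b * 1 * s - (-c + b * t) * (1 / (2 * s))) / s ^ 2))) t := by
    exact ((hasDerivAt_gaussCdf _).comp t hg).add
      (((hasDerivAt_gaussCdf _).comp t hh).const_mul _)
  have heq : FF c b =ᶠ[𝓝 t]
      fun t : ℝ => gaussCdf ((-c - b * t) / Real.sqrt t) +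
        Real.exp (-2 * b * c) * gaussCdf ((-c + b * t) / Real.sqrt t) := by
    filter_upwards [Ioi_mem_nhds ht] with u hu
    simp only [FF, if_neg (not_le.2 (mem_Ioi.1 hu))]
  have e1 : gaussPdf ((-c - b * t) / s) = gaussPdf ((c + b * t) / s) := by
    rw [show (-c - b * t) / s = -((c + b * t) / s) by ring, gaussPdf_even]
  have e2 : Real.exp (-2 * b * c) * gaussPdf ((-c + b * t) / s)
      = gaussPdf ((c + b * t) / s) := by
    unfold gaussPdf
    rw [← mul_assoc, mul_comm (Real.exp _) _, mul_assoc, ← Real.exp_add]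
    congr 1
    rw [div_pow, div_pow, hs2]
    field_simp
    ring
  refine HasDerivAt.congr_of_eventuallyEq ?_ heq
  refine hG.congr_deriv ?_
  symm
  rw [e1, ← mul_assoc, mul_comm (Real.exp (-2 * b * c)) (gaussPdf ((-c + b * t) / s)),
    mul_comm (gaussPdf ((-c + b * t) / s)) (Real.exp (-2 * b * c)), e2, ← mul_add,
    mul_comm (gaussPdf ((c + b * t) / s))]
  congr 1
  rw [h32, ← hs2]
  field_simp
  ring

lemma tendsto_arg_zero (c b : ℝ) (hc : 0 < c) :
    Tendsto (fun t : ℝ => (-c + b * t) / Real.sqrt t) (𝓝[>] 0) atBot := by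
  have hsqrt : Tendsto (fun t : ℝ => Real.sqrt t) (𝓝[>] 0) (𝓝[>] 0) := by
    rw [tendsto_nhdsWithin_iff]
    constructor
    · have h := (Real.continuous_sqrt.tendsto 0).mono_left
        (nhdsWithin_le_nhds (s := Ioi (0:ℝ)))
      simpa using h
    · filter_upwards [self_mem_nhdsWithin] with t ht
      exact Real.sqrt_pos.2 (mem_Ioi.1 ht)
  have hinv : Tendsto (fun t : ℝ => (Real.sqrt t)⁻¹) (𝓝[>] 0) atTop :=
    tendsto_inv_nhdsGT_zero.comp hsqrt
  have hnum : Tendsto (fun t : ℝ => -c + b * t) (𝓝[>] 0) (𝓝 (-c)) := by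
    have h : Tendsto (fun t : ℝ => -c + b * t) (𝓝 0) (𝓝 (-c + b * 0)) :=
      ((continuous_const.add (continuous_const.mul continuous_id)).tendsto 0)
    simpa using h.mono_left (nhdsWithin_le_nhds (s := Ioi (0:ℝ)))
  have := hnum.neg_mul_atTop (by linarith : -c < 0) hinv
  refine this.congr fun t => ?_
  rw [div_eq_mul_inv]

lemma continuousWithinAt_FF (c b : ℝ) (hc : 0 < c) :
    ContinuousWithinAt (FF c b) (Ici 0) 0 := by
  rw [← continuousWithinAt_Ioi_iff_Ici]
  have h1 : Tendsto (fun t : ℝ => (-c - b * t) / Real.sqrt t) (𝓝[>] 0) atBot := by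
    have := tendsto_arg_zero c (-b) hc
    refine this.congr fun t => ?_
    ring_nf
  have h2 := tendsto_arg_zero c b hc
  have hF : Tendsto (fun t : ℝ => gaussCdf ((-c - b * t) / Real.sqrt t) +
      Real.exp (-2 * b * c) * gaussCdf ((-c + b * t) / Real.sqrt t)) (𝓝[>] 0) (𝓝 0) := by
    have := (tendsto_gaussCdf_atBot.comp h1).add
      ((tendsto_gaussCdf_atBot.comp h2).const_mul (Real.exp (-2 * b * c)))
    simpa using this
  have : Tendsto (FF c b) (𝓝[>] 0) (𝓝 0) := by
    refine hF.congr' ?_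
    filter_upwards [self_mem_nhdsWithin] with t ht
    simp only [FF, if_neg (not_le.2 (mem_Ioi.1 ht))]
  unfold ContinuousWithinAt
  have hF0 : FF c b 0 = 0 := by simp [FF]
  rw [hF0]
  exact this

lemma tendsto_sqrt_atTop' : Tendsto Real.sqrt atTop atTop := by
  have h := tendsto_rpow_atTop (by norm_num : (0:ℝ) < 1/2)
  refine h.congr fun t => (Real.sqrt_eq_rpow t).symm

lemma tendsto_FF_atTop (c b : ℝ) (hc : 0 < c) :
    Tendsto (FF c b) atTop (𝓝 (if 0 < b then Real.exp (-2 * b * c) else 1)) := by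
  have l0 : ∀ c' : ℝ, Tendsto (fun t : ℝ => c' / Real.sqrt t) atTop (𝓝 0) :=
    fun c' => Tendsto.div_atTop tendsto_const_nhds tendsto_sqrt_atTop'
  have hgeq : (fun t : ℝ => (-c - b * t) / Real.sqrt t)
      =ᶠ[atTop] fun t : ℝ => -c / Real.sqrt t + -(b * Real.sqrt t) := by
    filter_upwards [eventually_gt_atTop (0 : ℝ)] with t ht
    have hs0 : (0:ℝ) < Real.sqrt t := Real.sqrt_pos.2 ht
    have hs2 : Real.sqrt t * Real.sqrt t = t := Real.mul_self_sqrt ht.le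
    field_simp
    linear_combination b * hs2
  have hheq : (fun t : ℝ => (-c + b * t) / Real.sqrt t)
      =ᶠ[atTop] fun t : ℝ => -c / Real.sqrt t + b * Real.sqrt t := by
    filter_upwards [eventually_gt_atTop (0 : ℝ)] with t ht
    have hs0 : (0:ℝ) < Real.sqrt t := Real.sqrt_pos.2 ht
    have hs2 : Real.sqrt t * Real.sqrt t = t := Real.mul_self_sqrt ht.le
    field_simp
    linear_combination -b * hs2
  have hFFeq : FF c b =ᶠ[atTop] fun t : ℝ =>
      gaussCdf ((-c - b * t) / Real.sqrt t) +
        Real.exp (-2 * b * c) * gaussCdf ((-c + b * t) / Real.sqrt t) := by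
    filter_upwards [eventually_gt_atTop (0 : ℝ)] with t ht
    simp only [FF, if_neg (not_le.2 ht)]
  rcases lt_trichotomy b 0 with hb | hb | hb
  · rw [if_neg (by linarith)]
    have hbs : Tendsto (fun t : ℝ => -(b * Real.sqrt t)) atTop atTop := by
      have := tendsto_sqrt_atTop'.const_mul_atTop (by linarith : (0:ℝ) < -b)
      refine this.congr fun t => by ring
    have hg : Tendsto (fun t : ℝ => (-c - b * t) / Real.sqrt t) atTop atTop :=
      (Tendsto.add_atTop (l0 (-c)) hbs).congr' hgeq.symm
    have hh : Tendsto (fun t : ℝ => (-c + b * t) / Real.sqrt t) atTop atBot := by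
      refine (Tendsto.add_atBot (l0 (-c)) ?_).congr' hheq.symm
      have := tendsto_sqrt_atTop'.const_mul_atTop (by linarith : (0:ℝ) < -b)
      have h2 := tendsto_neg_atTop_atBot.comp this
      refine h2.congr fun t => by simp
    have := (tendsto_gaussCdf_atTop.comp hg).add
      ((tendsto_gaussCdf_atBot.comp hh).const_mul (Real.exp (-2 * b * c)))
    rw [show (1:ℝ) = 1 + Real.exp (-2 * b * c) * 0 by ring]
    exact (this.congr' hFFeq.symm)
  · subst hb
    have hg : Tendsto (fun t : ℝ => (-c - 0 * t) / Real.sqrt t) atTop (𝓝 0) := by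
      refine (l0 (-c)).congr fun t => by ring_nf
    have hh : Tendsto (fun t : ℝ => (-c + 0 * t) / Real.sqrt t) atTop (𝓝 0) := by
      refine (l0 (-c)).congr fun t => by ring_nf
    have := ((continuous_gaussCdf.tendsto 0).comp hg).add
      (((continuous_gaussCdf.tendsto 0).comp hh).const_mul (Real.exp (-2 * 0 * c)))
    rw [if_neg (lt_irrefl 0)]
    have hval : gaussCdf 0 + Real.exp (-2 * 0 * c) * gaussCdf 0 = 1 := by
      rw [gaussCdf_zero]; norm_num
    rw [← hval]
    exact this.congr' hFFeq.symm
  · rw [if_pos hb]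
    have hbs : Tendsto (fun t : ℝ => b * Real.sqrt t) atTop atTop :=
      tendsto_sqrt_atTop'.const_mul_atTop hb
    have hg : Tendsto (fun t : ℝ => (-c - b * t) / Real.sqrt t) atTop atBot := by
      refine (Tendsto.add_atBot (l0 (-c)) (tendsto_neg_atTop_atBot.comp hbs)).congr' hgeq.symm
    have hh : Tendsto (fun t : ℝ => (-c + b * t) / Real.sqrt t) atTop atTop :=
      (Tendsto.add_atTop (l0 (-c)) hbs).congr' hheq.symm
    have := (tendsto_gaussCdf_atBot.comp hg).add
      ((tendsto_gaussCdf_atTop.comp hh).const_mul (Real.exp (-2 * b * c)))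
    rw [show Real.exp (-2 * b * c) = 0 + Real.exp (-2 * b * c) * 1 by ring]
    exact this.congr' hFFeq.symm

lemma key (c b : ℝ) (hc : 0 < c) :
    ∫ t in Ioi (0:ℝ), c / t ^ ((3:ℝ)/2) * gaussPdf ((c + b * t) / Real.sqrt t)
      = if 0 < b then Real.exp (-2 * b * c) else 1 := by
  have h := integral_Ioi_of_hasDerivAt_of_nonneg (continuousWithinAt_FF c b hc)
    (fun t ht => hasDerivAt_FF c b (mem_Ioi.1 ht))
    (fun t ht => mul_nonneg (div_nonneg hc.le (Real.rpow_nonneg (le_of_lt (mem_Ioi.1 ht)) _))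
      (gaussPdf_nonneg _))
    (tendsto_FF_atTop c b hc)
  have hFF0 : FF c b 0 = 0 := by simp [FF]
  rw [hFF0, sub_zero] at h
  exact h

theorem stmt9 (a x b : ℝ) (hax : x ≠ a) :
    ((a - x) * b ≤ 0 →
      ∫ t in Set.Ioi (0 : ℝ),
          (|a - x| / t ^ ((3 : ℝ) / 2)) * gaussPdf ((a + b * t - x) / Real.sqrt t) = 1) ∧
    ((a - x) * b > 0 →
      ∫ t in Set.Ioi (0 : ℝ),
          (|a - x| / t ^ ((3 : ℝ) / 2)) * gaussPdf ((a + b * t - x) / Real.sqrt t)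
        = Real.exp (-2 * b * (a - x))) := by
  rcases lt_or_gt_of_ne (sub_ne_zero.2 (Ne.symm hax)) with hlt | hgt
  · -- a - x < 0
    set c := x - a with hcdef
    have hc : 0 < c := by simp only [hcdef]; linarith
    have hrw : ∀ t : ℝ, |a - x| / t ^ ((3:ℝ)/2) * gaussPdf ((a + b * t - x) / Real.sqrt t)
        = c / t ^ ((3:ℝ)/2) * gaussPdf ((c + (-b) * t) / Real.sqrt t) := by
      intro t
      have habs : |a - x| = c := by rw [abs_of_neg hlt]; ring
      have harg : (a + b * t - x) / Real.sqrt t = -((c + (-b) * t) / Real.sqrt t) := by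
        rw [← neg_div, hcdef]; ring_nf
      rw [habs, harg, gaussPdf_even]
    have hkey := key c (-b) hc
    constructor
    · intro hble
      have hb : ¬ 0 < -b := by
        intro h
        nlinarith
      simp only [hrw]
      rw [hkey, if_neg hb]
    · intro hbgt
      have hb : 0 < -b := by nlinarith
      simp only [hrw]
      rw [hkey, if_pos hb]
      congr 1
      rw [hcdef]; ring_nf
  · -- a - x > 0
    set c := a - x with hcdef
    have hc : 0 < c := hgt
    have hrw : ∀ t : ℝ, |a - x| / t ^ ((3:ℝ)/2) * gaussPdf ((a + b * t - x) / Real.sqrt t)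
        = c / t ^ ((3:ℝ)/2) * gaussPdf ((c + b * t) / Real.sqrt t) := by
      intro t
      have habs : |a - x| = c := abs_of_pos hgt
      have harg : a + b * t - x = c + b * t := by ring
      rw [habs, harg]
    have hkey := key c b hc
    constructor
    · intro hble
      have hb : ¬ 0 < b := by
        intro h
        nlinarith
      rw [hcdef]; simp only [hrw]
      rw [hkey, if_neg hb]
    · intro hbgt
      have hb : 0 < b := by nlinarith
      rw [hcdef]; simp only [hrw]
      rw [hkey, if_pos hb]
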